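/- Every weightless most perfect square matrix (semimagic of weight 0, strongly pandiagonal of weight 0, with all cyclic 2×2 block sums zero and alternating total sum zero) of even size n has rank at most 2; a general most perfect square matrix (weight w) has rank at most 3. -/
import Mathlib

open Matrix

private lemma rank_add_le' {m : Type*} [Fintype m]
    (A B : Matrix m m ℝ) : (A + B).rank ≤ A.rank + B.rank := by
  classical
  rw [Matrix.rank, Matrix.rank, Matrix.rank, Matrix.mulVecLin_add]
  have h : LinearMap.range (A.mulVecLin + B.mulVecLin) ≤
      LinearMap.range A.mulVecLin ⊔ LinearMap.range B.mulVecLin := by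
    rintro x ⟨y, rfl⟩
    exact Submodule.add_mem_sup (LinearMap.mem_range_self _ y) (LinearMap.mem_range_self _ y)
  exact (Submodule.finrank_mono h).trans
    (Submodule.finrank_add_le_finrank_add_finrank _ _)

private lemma rank_vecMulVec_le' {m : Type*} [Fintype m] [DecidableEq m]
    (u v : m → ℝ) : (vecMulVec u v).rank ≤ 1 := by
  rw [vecMulVec_eq (Fin 1)]
  exact (Matrix.rank_mul_le_left _ _).trans
    ((Matrix.rank_le_card_width _).trans (by simp))

theorem stmt_17 (n ν : ℕ) [NeZero n] (hn : n = 2 * ν)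
    (M : Matrix (ZMod n) (ZMod n) ℝ) (w : ℝ)
    (hrow : ∀ i : ZMod n, ∑ j : ZMod n, M i j = n * w)
    (hcol : ∀ i : ZMod n, ∑ j : ZMod n, M j i = n * w)
    (hpan : ∀ i j : ZMod n, M i j + M (i + (ν : ZMod n)) (j + (ν : ZMod n)) = 2 * w)
    (hblock : ∀ i j : ZMod n,
      M i j + M i (j + 1) + M (i + 1) j + M (i + 1) (j + 1) = 4 * w)
    (halt : ∑ i : ZMod n, ∑ j : ZMod n, (-1 : ℝ) ^ (i.val + j.val) * M i j = 0) :
    M.rank ≤ 3 ∧ (w = 0 → M.rank ≤ 2) := by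
  classical
  have hnpos : 0 < n := Nat.pos_of_ne_zero (NeZero.ne n)
  have hneven : Even n := ⟨ν, by omega⟩
  -- the sign function
  set ε : ZMod n → ℝ := fun i => (-1 : ℝ) ^ i.val with hε
  have hmod : ∀ k : ℕ, ((-1 : ℝ)) ^ (k % n) = (-1 : ℝ) ^ k := by
    intro k
    conv_rhs => rw [← Nat.div_add_mod k n]
    rw [pow_add, pow_mul, hneven.neg_one_pow, one_pow, one_mul]
  have hεcast : ∀ k : ℕ, ε ((k : ZMod n)) = (-1 : ℝ) ^ k := by
    intro k
    simp only [hε, ZMod.val_natCast]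
    exact hmod k
  have hε0 : ε 0 = 1 := by
    have := hεcast 0
    simpa using this
  have hεsucc : ∀ i : ZMod n, ε (i + 1) = -ε i := by
    intro i
    have h2 : i + 1 = (((i.val + 1 : ℕ)) : ZMod n) := by
      push_cast
      rw [ZMod.natCast_val, ZMod.cast_id]
    rw [h2, hεcast, pow_succ]
    simp [hε]
  -- key recursion: column-pair sums alternate
  have hS : ∀ i j : ZMod n, M i j + M (i + 1) j
      = 2 * w + ε j * (M i 0 + M (i + 1) 0 - 2 * w) := by
    intro i j
    have key : ∀ k : ℕ, M i (k : ZMod n) + M (i + 1) (k : ZMod n)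
        = 2 * w + (-1 : ℝ) ^ k * (M i 0 + M (i + 1) 0 - 2 * w) := by
      intro k
      induction k with
      | zero => simp
      | succ k ih =>
        have hb := hblock i (k : ZMod n)
        have : ((k + 1 : ℕ) : ZMod n) = (k : ZMod n) + 1 := by push_cast; ring
        rw [this]
        rw [pow_succ]
        nlinarith [ih, hb]
    have hj : j = ((j.val : ℕ) : ZMod n) := by
      rw [ZMod.natCast_val, ZMod.cast_id]
    calc M i j + M (i + 1) j = M i ((j.val : ℕ) : ZMod n) + M (i + 1) ((j.val : ℕ) : ZMod n) := by
          rw [← hj]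
      _ = 2 * w + (-1 : ℝ) ^ j.val * (M i 0 + M (i + 1) 0 - 2 * w) := key j.val
      _ = 2 * w + ε j * (M i 0 + M (i + 1) 0 - 2 * w) := rfl
  -- explicit representation
  set a : ZMod n → ℝ := fun j => M 0 j - w with ha
  set b : ZMod n → ℝ := fun i => M i 0 - w - ε i * (M 0 0 - w) with hb
  have hrep : ∀ i j : ZMod n, M i j = w + ε i * a j + ε j * b i := by
    intro i j
    have key : ∀ k : ℕ, M (k : ZMod n) j = w + (-1 : ℝ) ^ k * a j + ε j * b (k : ZMod n) := by
      intro k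
      induction k with
      | zero =>
        simp only [Nat.cast_zero, pow_zero, one_mul, hb, ha, hε0]
        ring
      | succ k ih =>
        have hrec := hS (k : ZMod n) j
        have hrec0 := hS (k : ZMod n) 0
        have hcast : ((k + 1 : ℕ) : ZMod n) = (k : ZMod n) + 1 := by push_cast; ring
        have hεk : ε ((k : ZMod n)) = (-1 : ℝ) ^ k := hεcast k
        have hεk1 : ε ((k : ZMod n) + 1) = -(-1 : ℝ) ^ k := by
          rw [hεsucc, hεk]
        rw [hcast, pow_succ]
        have hbk : b ((k : ZMod n)) = M (k : ZMod n) 0 - w - (-1 : ℝ) ^ k * (M 0 0 - w) := by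
          simp only [hb, hεk]
        have hbk1 : b ((k : ZMod n) + 1) = M ((k : ZMod n) + 1) 0 - w
            + (-1 : ℝ) ^ k * (M 0 0 - w) := by
          simp only [hb, hεk1]; ring
        -- from hrec : M k j + M (k+1) j = 2w + ε j * (M k 0 + M (k+1) 0 - 2w)
        have : M ((k : ZMod n) + 1) j
            = 2 * w + ε j * (M (k : ZMod n) 0 + M ((k : ZMod n) + 1) 0 - 2 * w)
              - M (k : ZMod n) j := by linarith [hrec]
        rw [this, ih, hbk1]
        rw [hbk]
        ring
    have hi : i = ((i.val : ℕ) : ZMod n) := by rw [ZMod.natCast_val, ZMod.cast_id]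
    calc M i j = M ((i.val : ℕ) : ZMod n) j := by rw [← hi]
      _ = w + (-1 : ℝ) ^ i.val * a j + ε j * b ((i.val : ℕ) : ZMod n) := key i.val
      _ = w + ε i * a j + ε j * b i := by rw [← hi]
  -- decompose M as a sum of rank-one matrices
  have hdecomp : M = vecMulVec (fun _ => w) (fun _ => (1 : ℝ))
      + vecMulVec ε a + vecMulVec b ε := by
    ext i j
    simp only [Matrix.add_apply, vecMulVec_apply]
    rw [hrep i j]
    ring
  constructor
  · calc M.rank ≤ (vecMulVec (fun _ : ZMod n => w) (fun _ : ZMod n => (1 : ℝ))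
          + vecMulVec ε a).rank + (vecMulVec b ε).rank := by
          rw [hdecomp]; exact rank_add_le' _ _
      _ ≤ ((vecMulVec (fun _ : ZMod n => w) (fun _ : ZMod n => (1 : ℝ))).rank
          + (vecMulVec ε a).rank) + (vecMulVec b ε).rank := by
          exact Nat.add_le_add_right (rank_add_le' _ _) _
      _ ≤ (1 + 1) + 1 := by
          exact Nat.add_le_add (Nat.add_le_add (rank_vecMulVec_le' _ _)
            (rank_vecMulVec_le' _ _)) (rank_vecMulVec_le' _ _)
      _ = 3 := rfl
  · intro hw
    have hM2 : M = vecMulVec ε a + vecMulVec b ε := by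
      rw [hdecomp, hw]
      have : vecMulVec (fun _ : ZMod n => (0 : ℝ)) (fun _ : ZMod n => (1 : ℝ)) = 0 := by
        ext i j; simp [vecMulVec_apply]
      rw [this, zero_add]
    calc M.rank ≤ (vecMulVec ε a).rank + (vecMulVec b ε).rank := by
          rw [hM2]; exact rank_add_le' _ _
      _ ≤ 1 + 1 := Nat.add_le_add (rank_vecMulVec_le' _ _) (rank_vecMulVec_le' _ _)
      _ = 2 := rfl
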